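/- Let d ≥ 4, n ≥ 2. The group of diagonal matrices in PGL_{n+2}(C) preserving the Delsarte form x_0^{d-1}x_1 + x_1^{d-1}x_2 + ... + x_n^{d-1}x_{n+1} + x_{n+1}^d up to scalar is cyclic of order (d-1)^{n+1}. -/

import Mathlib

/-- The homomorphism sending a scalar `c ∈ ℂˣ` to the constant diagonal tuple. -/
def constHom (k : ℕ) : ℂˣ →* (Fin k → ℂˣ) where
  toFun c := fun _ => c
  map_one' := rfl
  map_mul' _ _ := rfl

/-- The group of invertible diagonal scalings `diag(λ₀, ..., λ_{n+1})` preserving the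
Delsarte form `x₀^{d-1}x₁ + ⋯ + x_n^{d-1}x_{n+1} + x_{n+1}^d` up to a scalar `μ`,
i.e. those with `λᵢ^{d-1} λ_{i+1} = μ` for `i = 0, …, n` and `λ_{n+1}^d = μ`. -/
def DelsarteDiag (n d : ℕ) : Subgroup (Fin (n + 2) → ℂˣ) where
  carrier := {l | ∃ μ : ℂˣ,
    (∀ i : Fin (n + 1), l i.castSucc ^ (d - 1) * l i.succ = μ) ∧
      l (Fin.last (n + 1)) ^ d = μ}
  one_mem' := ⟨1, fun _ => by simp, by simp⟩
  mul_mem' := by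
    rintro a b ⟨μ, ha, ha'⟩ ⟨ν, hb, hb'⟩
    refine ⟨μ * ν, fun i => ?_, ?_⟩
    · rw [Pi.mul_apply, Pi.mul_apply, mul_pow, mul_mul_mul_comm, ha i, hb i]
    · rw [Pi.mul_apply, mul_pow, ha', hb']
  inv_mem' := by
    rintro a ⟨μ, ha, ha'⟩
    refine ⟨μ⁻¹, fun i => ?_, ?_⟩
    · rw [Pi.inv_apply, Pi.inv_apply, inv_pow, ← mul_inv, ha i]
    · rw [Pi.inv_apply, inv_pow, ha']

/-- The normalized relation: for `l ∈ DelsarteDiag n d` (with `d ≥ 1`),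
the tuple `a i = l i * (l last)⁻¹` satisfies `a i.castSucc ^ (d-1) * a i.succ = 1`. -/
theorem delsarte_normalized {n d : ℕ} (hd : 1 ≤ d) {l : Fin (n + 2) → ℂˣ}
    (hl : l ∈ DelsarteDiag n d) (i : Fin (n + 1)) :
    (l i.castSucc * (l (Fin.last (n + 1)))⁻¹) ^ (d - 1) *
      (l i.succ * (l (Fin.last (n + 1)))⁻¹) = 1 := by
  obtain ⟨μ, hmu, hlast⟩ := hl
  have hdd : d - 1 + 1 = d := by omega
  rw [mul_pow, inv_pow, mul_mul_mul_comm, hmu i, ← mul_inv, ← pow_succ, hdd, hlast,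
    mul_inv_cancel]

theorem delsarte_pow_eq_one {n d : ℕ} (hd : 1 ≤ d) {l : Fin (n + 2) → ℂˣ}
    (hl : l ∈ DelsarteDiag n d) :
    ∀ j : ℕ, (hj : j ≤ n + 1) →
      (l ⟨n + 1 - j, by omega⟩ * (l (Fin.last (n + 1)))⁻¹) ^ (d - 1) ^ j = 1 := by
  intro j
  induction j with
  | zero =>
    intro _
    have he : (⟨n + 1 - 0, by omega⟩ : Fin (n + 2)) = Fin.last (n + 1) := by
      ext; simp [Fin.last]
    rw [he, pow_zero, pow_one, mul_inv_cancel]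
  | succ j ih =>
    intro hj
    have ihj := ih (by omega)
    set i : Fin (n + 1) := ⟨n - j, by omega⟩ with hi
    have hc : (⟨n + 1 - (j + 1), by omega⟩ : Fin (n + 2)) = i.castSucc := by
      ext; simp [hi, Fin.castSucc, Fin.castAdd, Fin.castLE]
    have hs : (⟨n + 1 - j, by omega⟩ : Fin (n + 2)) = i.succ := by
      ext; simp [hi, Fin.succ]; omega
    have hrel := delsarte_normalized hd hl i
    have hrel' : (l i.castSucc * (l (Fin.last (n + 1)))⁻¹) ^ (d - 1) =
        ((l i.succ * (l (Fin.last (n + 1)))⁻¹))⁻¹ := by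
      rw [eq_inv_iff_mul_eq_one]; exact hrel
    rw [hc, pow_succ', pow_mul, hrel', inv_pow, ← hs, ihj, inv_one]

theorem stmt_7 (n d : ℕ) (hn : 2 ≤ n) (hd : 4 ≤ d) :
    IsCyclic (DelsarteDiag n d ⧸ ((constHom (n + 2)).range.subgroupOf (DelsarteDiag n d))) ∧
    Nat.card (DelsarteDiag n d ⧸ ((constHom (n + 2)).range.subgroupOf (DelsarteDiag n d)))
      = (d - 1) ^ (n + 1) := by
  have hd1 : 1 ≤ d := by omega
  set N : ℕ := (d - 1) ^ (n + 1) with hN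
  haveI : NeZero N := ⟨(pow_pos (show 0 < d - 1 by omega) (n + 1)).ne'⟩
  -- the homomorphism `l ↦ l 0 / l last`
  let ψ : (Fin (n + 2) → ℂˣ) →* ℂˣ :=
    (Pi.evalMonoidHom (fun _ => ℂˣ) 0) / (Pi.evalMonoidHom (fun _ => ℂˣ) (Fin.last (n + 1)))
  have hψ : ∀ l : Fin (n + 2) → ℂˣ, ψ l = l 0 * (l (Fin.last (n + 1)))⁻¹ := by
    intro l; simp [ψ, div_eq_mul_inv]
  let φ : (DelsarteDiag n d) →* ℂˣ := ψ.comp (DelsarteDiag n d).subtype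
  have hzero : (⟨n + 1 - (n + 1), by omega⟩ : Fin (n + 2)) = 0 := by ext; simp
  -- forward: ψ l is an N-th root of unity
  have hfwd : ∀ l ∈ DelsarteDiag n d, ψ l ^ N = 1 := by
    intro l hl
    have := delsarte_pow_eq_one hd1 hl (n + 1) le_rfl
    rw [hzero] at this
    rw [hψ l, hN]
    exact this
  -- kernel computation
  have hker : ((constHom (n + 2)).range.subgroupOf (DelsarteDiag n d)) = φ.ker := by
    ext ⟨l, hl⟩
    simp only [Subgroup.mem_subgroupOf, MonoidHom.mem_range, MonoidHom.mem_ker]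
    constructor
    · rintro ⟨c, hc⟩
      have : l = fun _ => c := by
        simpa [constHom] using hc.symm
      simp [φ, hψ, this]
    · intro h
      have h0 : l 0 * (l (Fin.last (n + 1)))⁻¹ = 1 := by rw [← hψ l]; exact h
      have key : ∀ i : Fin (n + 2), l i * (l (Fin.last (n + 1)))⁻¹ = 1 := by
        intro i
        induction i using Fin.induction with
        | zero => exact h0
        | succ i ih =>
          have := delsarte_normalized hd1 hl i
          rw [ih, one_pow, one_mul] at this
          exact this
      refine ⟨l (Fin.last (n + 1)), ?_⟩
      funext i
      have := key i
      rw [mul_inv_eq_one] at this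
      simp [constHom, this]
  -- range computation
  have hrange : φ.range = rootsOfUnity N ℂ := by
    ext z
    simp only [MonoidHom.mem_range, mem_rootsOfUnity]
    constructor
    · rintro ⟨⟨l, hl⟩, rfl⟩
      exact hfwd l hl
    · intro hz
      set D : ℤ := (d : ℤ) - 1 with hD
      have hDcast : ((d - 1 : ℕ) : ℤ) = D := by rw [hD]; omega
      set l : Fin (n + 2) → ℂˣ := fun i => z ^ ((-D) ^ (i : ℕ)) with hldef
      have hzN : z ^ ((N : ℕ) : ℤ) = 1 := by rw [zpow_natCast]; exact hz
      have hzpow : ∀ m : ℤ, z ^ (((N : ℕ) : ℤ) * m) = 1 := by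
        intro m; rw [zpow_mul, hzN, one_zpow]
      have hlast : l (Fin.last (n + 1)) = 1 := by
        rw [hldef]
        show z ^ ((-D) ^ ((Fin.last (n + 1) : Fin (n + 2)) : ℕ)) = 1
        rw [Fin.val_last]
        have : (-D) ^ (n + 1) = ((N : ℕ) : ℤ) * (-1) ^ (n + 1) := by
          rw [hN, hD, neg_pow]; push_cast [Nat.cast_sub hd1]; ring
        rw [this, hzpow]
      have hmem : l ∈ DelsarteDiag n d := by
        refine ⟨1, fun i => ?_, by rw [hlast, one_pow]⟩
        show (z ^ ((-D) ^ ((i.castSucc : Fin (n + 2)) : ℕ))) ^ (d - 1) *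
          z ^ ((-D) ^ ((i.succ : Fin (n + 2)) : ℕ)) = 1
        rw [Fin.coe_castSucc, Fin.val_succ, ← zpow_natCast (z ^ ((-D) ^ (i : ℕ))) (d - 1),
          ← zpow_mul, ← zpow_add]
        have : (-D) ^ (i : ℕ) * ((d - 1 : ℕ) : ℤ) + (-D) ^ ((i : ℕ) + 1) = 0 := by
          rw [hDcast, pow_succ]; ring
        rw [this, zpow_zero]
      refine ⟨⟨l, hmem⟩, ?_⟩
      show ψ l = z
      rw [hψ, hlast, inv_one, mul_one, hldef]
      show z ^ ((-D) ^ ((0 : Fin (n + 2)) : ℕ)) = z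
      rw [Fin.val_zero, pow_zero, zpow_one]
  -- assemble
  let e : (DelsarteDiag n d ⧸ ((constHom (n + 2)).range.subgroupOf (DelsarteDiag n d))) ≃*
      rootsOfUnity N ℂ :=
    (QuotientGroup.quotientMulEquivOfEq hker).trans
      ((QuotientGroup.quotientKerEquivRange φ).trans (MulEquiv.subgroupCongr hrange))
  constructor
  · exact isCyclic_of_surjective e.symm.toMonoidHom e.symm.surjective
  · rw [Nat.card_congr e.toEquiv, Complex.card_rootsOfUnity]
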